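/- Let Ω ⊆ ℝ² be open and let f : Ω → ℝ³ be twice continuously differentiable. Suppose that for every point p ∈ Ω and every vector v ∈ ℝ³ there exist an open neighborhood U ⊆ Ω of p and a twice continuously differentiable map ε : U → ℝ³ with ε(p) = v satisfying ∂₁ε = 2ε × ∂₂f and ∂₂ε = −2ε × ∂₁f on U. Then f satisfies ∂₁∂₁f + ∂₂∂₂f = 2·(∂₁f × ∂₂f) on Ω. -/

import Mathlib

open scoped RealInnerProductSpace ContDiff

/-- First partial derivative (in the first coordinate direction of `ℝ × ℝ`). -/
noncomputable def pd1 {E : Type*} [NormedAddCommGroup E] [NormedSpace ℝ E]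
    (f : ℝ × ℝ → E) : ℝ × ℝ → E := fun p => fderiv ℝ f p (1, 0)

/-- Second partial derivative (in the second coordinate direction of `ℝ × ℝ`). -/
noncomputable def pd2 {E : Type*} [NormedAddCommGroup E] [NormedSpace ℝ E]
    (f : ℝ × ℝ → E) : ℝ × ℝ → E := fun p => fderiv ℝ f p (0, 1)

/-- The standard cross product on `ℝ³`. -/
def cross3 (a b : EuclideanSpace ℝ (Fin 3)) : EuclideanSpace ℝ (Fin 3) := WithLp.toLp 2 (crossProduct a b)

noncomputable def crossCLM :
    EuclideanSpace ℝ (Fin 3) →L[ℝ] EuclideanSpace ℝ (Fin 3) →L[ℝ] EuclideanSpace ℝ (Fin 3) :=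
  LinearMap.toContinuousLinearMap
  { toFun := fun a => LinearMap.toContinuousLinearMap
      { toFun := fun b => cross3 a b
        map_add' := fun x y => by simp [cross3, map_add]
        map_smul' := fun c x => by simp [cross3, map_smul] }
    map_add' := fun x y => by ext z; simp [cross3, map_add]
    map_smul' := fun c x => by ext z; simp [cross3, map_smul] }

@[simp] lemma crossCLM_apply (a b : EuclideanSpace ℝ (Fin 3)) : crossCLM a b = cross3 a b := rfl

lemma hasFDerivAt_cross {a b : ℝ × ℝ → EuclideanSpace ℝ (Fin 3)} {p : ℝ × ℝ}
    (ha : DifferentiableAt ℝ a p) (hb : DifferentiableAt ℝ b p) :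
    HasFDerivAt (fun q => cross3 (a q) (b q))
      ((crossCLM (a p)).comp (fderiv ℝ b p) + (crossCLM.comp (fderiv ℝ a p)).flip (b p)) p := by
  have hc : HasFDerivAt (fun q => crossCLM (a q)) (crossCLM.comp (fderiv ℝ a p)) p :=
    crossCLM.hasFDerivAt.comp p ha.hasFDerivAt
  exact hc.clm_apply hb.hasFDerivAt

lemma fderiv_cross_apply {a b : ℝ × ℝ → EuclideanSpace ℝ (Fin 3)} {p : ℝ × ℝ}
    (ha : DifferentiableAt ℝ a p) (hb : DifferentiableAt ℝ b p) (w : ℝ × ℝ) :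
    fderiv ℝ (fun q => cross3 (a q) (b q)) p w
      = cross3 (a p) (fderiv ℝ b p w) + cross3 (fderiv ℝ a p w) (b p) := by
  rw [(hasFDerivAt_cross ha hb).fderiv]; simp

lemma differentiableAt_pd {E : Type*} [NormedAddCommGroup E] [NormedSpace ℝ E]
    {φ : ℝ × ℝ → E} {p : ℝ × ℝ} (h : ContDiffAt ℝ 2 φ p) (w : ℝ × ℝ) :
    DifferentiableAt ℝ (fun q => fderiv ℝ φ q w) p :=
  (ContinuousLinearMap.apply ℝ E w).differentiableAt.comp p
    ((h.fderiv_right (m := 1) one_add_one_eq_two.le).differentiableAt one_ne_zero)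

lemma fderiv_pd {E : Type*} [NormedAddCommGroup E] [NormedSpace ℝ E]
    {φ : ℝ × ℝ → E} {p : ℝ × ℝ} (h : ContDiffAt ℝ 2 φ p) (v w : ℝ × ℝ) :
    fderiv ℝ (fun q => fderiv ℝ φ q v) p w = fderiv ℝ (fderiv ℝ φ) p w v := by
  have hder : DifferentiableAt ℝ (fderiv ℝ φ) p :=
    (h.fderiv_right (m := 1) one_add_one_eq_two.le).differentiableAt one_ne_zero
  have hcomp : (fun q => fderiv ℝ φ q v) = (ContinuousLinearMap.apply ℝ E v) ∘ (fderiv ℝ φ) := rfl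
  rw [hcomp, fderiv_comp p (ContinuousLinearMap.apply ℝ E v).differentiableAt hder,
    ContinuousLinearMap.fderiv]
  rfl

lemma pd_symm {E : Type*} [NormedAddCommGroup E] [NormedSpace ℝ E]
    {φ : ℝ × ℝ → E} {p : ℝ × ℝ} (h : ContDiffAt ℝ 2 φ p) :
    pd2 (pd1 φ) p = pd1 (pd2 φ) p := by
  have hs : IsSymmSndFDerivAt ℝ φ p := h.isSymmSndFDerivAt (by simp)
  show fderiv ℝ (fun q => fderiv ℝ φ q (1, 0)) p (0, 1)
      = fderiv ℝ (fun q => fderiv ℝ φ q (0, 1)) p (1, 0)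
  rw [fderiv_pd h, fderiv_pd h, hs]

lemma cross3_comp (a b : EuclideanSpace ℝ (Fin 3)) (i : Fin 3) :
    cross3 a b i = ![a 1 * b 2 - a 2 * b 1, a 2 * b 0 - a 0 * b 2, a 0 * b 1 - a 1 * b 0] i := by
  rw [cross3, cross_apply]

lemma cross_algebra (v a b A B : EuclideanSpace ℝ (Fin 3))
    (h : (2:ℝ) • (cross3 v B + cross3 (-((2:ℝ) • cross3 v a)) b)
       = -((2:ℝ) • (cross3 v A + cross3 ((2:ℝ) • cross3 v b) a))) :
    cross3 v (A + B - (2:ℝ) • cross3 a b) = 0 := by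
  ext i
  have hi := congrArg (fun x => x i) h
  fin_cases i <;>
  · simp only [PiLp.smul_apply, PiLp.add_apply, PiLp.neg_apply, PiLp.sub_apply, PiLp.zero_apply,
      cross3_comp, smul_eq_mul] at hi ⊢
    norm_num [Matrix.cons_val_zero, Matrix.cons_val_one, Matrix.cons_val_two, Matrix.tail_cons, Matrix.head_cons] at hi ⊢
    linear_combination hi / 2

lemma cross_zero_of_forall {w : EuclideanSpace ℝ (Fin 3)}
    (h : ∀ v, cross3 v w = 0) : w = 0 := by
  have h0 := fun i => congrArg (fun x => x i) (h (EuclideanSpace.single 0 1))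
  have h1 := fun i => congrArg (fun x => x i) (h (EuclideanSpace.single 1 1))
  ext i
  fin_cases i
  · have := h1 2
    simp only [cross3_comp, PiLp.zero_apply, EuclideanSpace.single_apply,
      Matrix.cons_val_two, Matrix.tail_cons, Matrix.head_cons] at this
    simpa using this
  · have := h0 2
    simp only [cross3_comp, PiLp.zero_apply, EuclideanSpace.single_apply,
      Matrix.cons_val_two, Matrix.tail_cons, Matrix.head_cons] at this
    simpa using this
  · have := h0 1
    simp only [cross3_comp, PiLp.zero_apply, EuclideanSpace.single_apply,
      Matrix.cons_val_one, Matrix.head_cons] at this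
    simpa using this

/-- If the homogeneous spinning sphere system is locally solvable with
arbitrary initial data, then `f` satisfies the CMC-one equation `Δ₀f = 2·∂₁f × ∂₂f`. -/
theorem flat_connection_implies_cmc (Ω : Set (ℝ × ℝ)) (hΩ : IsOpen Ω)
    (f : ℝ × ℝ → EuclideanSpace ℝ (Fin 3)) (hf : ContDiffOn ℝ 2 f Ω)
    (hsolve : ∀ p ∈ Ω, ∀ v : EuclideanSpace ℝ (Fin 3),
      ∃ U : Set (ℝ × ℝ), U ⊆ Ω ∧ IsOpen U ∧ p ∈ U ∧
        ∃ ε : ℝ × ℝ → EuclideanSpace ℝ (Fin 3),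
          ContDiffOn ℝ 2 ε U ∧ ε p = v ∧
          (∀ q ∈ U, pd1 ε q = (2 : ℝ) • cross3 (ε q) (pd2 f q)) ∧
          (∀ q ∈ U, pd2 ε q = -((2 : ℝ) • cross3 (ε q) (pd1 f q)))) :
    ∀ p ∈ Ω,
      pd1 (pd1 f) p + pd2 (pd2 f) p = (2 : ℝ) • cross3 (pd1 f p) (pd2 f p) := by
  intro p hp
  have hfp : ContDiffAt ℝ 2 f p := hf.contDiffAt (hΩ.mem_nhds hp)
  have d1f : DifferentiableAt ℝ (pd1 f) p := differentiableAt_pd hfp (1, 0)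
  have d2f : DifferentiableAt ℝ (pd2 f) p := differentiableAt_pd hfp (0, 1)
  have key : ∀ v, cross3 v
      (pd1 (pd1 f) p + pd2 (pd2 f) p - (2:ℝ) • cross3 (pd1 f p) (pd2 f p)) = 0 := by
    intro v
    obtain ⟨U, hUΩ, hU, hpU, ε, hεC, hεp, h1, h2⟩ := hsolve p hp v
    have hεp2 : ContDiffAt ℝ 2 ε p := hεC.contDiffAt (hU.mem_nhds hpU)
    have dε : DifferentiableAt ℝ ε p := hεp2.differentiableAt two_ne_zero
    have e1 : pd1 ε =ᶠ[nhds p] (fun q => (2:ℝ) • cross3 (ε q) (pd2 f q)) :=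
      Filter.eventuallyEq_of_mem (hU.mem_nhds hpU) (fun q hq => h1 q hq)
    have e2 : pd2 ε =ᶠ[nhds p] (fun q => -((2:ℝ) • cross3 (ε q) (pd1 f q))) :=
      Filter.eventuallyEq_of_mem (hU.mem_nhds hpU) (fun q hq => h2 q hq)
    have dc2 : DifferentiableAt ℝ (fun q => cross3 (ε q) (pd2 f q)) p :=
      (hasFDerivAt_cross dε d2f).differentiableAt
    have dc1 : DifferentiableAt ℝ (fun q => cross3 (ε q) (pd1 f q)) p :=
      (hasFDerivAt_cross dε d1f).differentiableAt
    have d21 : pd2 (pd1 ε) p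
        = (2:ℝ) • (cross3 (ε p) (pd2 (pd2 f) p) + cross3 (pd2 ε p) (pd2 f p)) := by
      show fderiv ℝ (pd1 ε) p (0, 1) = _
      rw [e1.fderiv_eq, fderiv_fun_const_smul dc2 (2:ℝ)]
      simp only [ContinuousLinearMap.smul_apply]
      rw [fderiv_cross_apply dε d2f]
      rfl
    have d12 : pd1 (pd2 ε) p
        = -((2:ℝ) • (cross3 (ε p) (pd1 (pd1 f) p) + cross3 (pd1 ε p) (pd1 f p))) := by
      show fderiv ℝ (pd2 ε) p (1, 0) = _
      rw [e2.fderiv_eq]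
      rw [show (fun q => -((2:ℝ) • cross3 (ε q) (pd1 f q)))
            = (fun q => -(((2:ℝ) • cross3 (ε q) (pd1 f q)))) from rfl]
      rw [fderiv_fun_neg]
      simp only [ContinuousLinearMap.neg_apply]
      rw [fderiv_fun_const_smul dc1 (2:ℝ)]
      simp only [ContinuousLinearMap.smul_apply]
      rw [fderiv_cross_apply dε d1f]
      rfl
    have heq := (d21.symm.trans (pd_symm hεp2)).trans d12
    rw [h1 p hpU, h2 p hpU, hεp] at heq
    exact cross_algebra v (pd1 f p) (pd2 f p) (pd1 (pd1 f) p) (pd2 (pd2 f) p) heq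
  exact sub_eq_zero.mp (cross_zero_of_forall key)
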